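/- Let k be a field, let D₀ and D₁ be fields containing k, and let M be a D₀–D₁-bimodule on which k acts centrally that is simple as a bimodule and has left-right dimension (m, n), where the characteristic of k divides neither m nor n. Then M has symmetric duals. -/

import Mathlib

section Bimod

/-- The right dual `Hom_S(N_S, S)` of a right `S`-module `N`
(right modules are treated as modules over the opposite ring). -/
abbrev RightDual (S : Type) [Ring S] (N : Type) [AddCommGroup N] [Module Sᵐᵒᵖ N] :
    Type := N →ₗ[Sᵐᵒᵖ] S

/-- The left dual `Hom_R(_R N, R)` of a left `R`-module `N`. -/
abbrev LeftDual (R : Type) [Ring R] (N : Type) [AddCommGroup N] [Module R N] :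
    Type := N →ₗ[R] R

variable (R S : Type) [Ring R] [Ring S]
variable (N : Type) [AddCommGroup N] [Module R N] [Module Sᵐᵒᵖ N]
  [SMulCommClass R Sᵐᵒᵖ N]

namespace RightDual

/-- If `N` is an `R`–`S`-bimodule, the right dual carries a right `R`-action by
precomposition with the left `R`-action: `(ψ • a) x = ψ (a • x)`. -/
instance : Module Rᵐᵒᵖ (RightDual S N) where
  smul a ψ := ψ.comp (DistribMulAction.toLinearMap Sᵐᵒᵖ N a.unop)
  one_smul ψ := by
    apply LinearMap.ext; intro x
    show ψ ((1 : R) • x) = ψ x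
    rw [one_smul]
  mul_smul a b ψ := by
    apply LinearMap.ext; intro x
    show ψ ((a * b).unop • x) = ψ (b.unop • a.unop • x)
    rw [MulOpposite.unop_mul, mul_smul]
  smul_zero a := by apply LinearMap.ext; intro x; rfl
  smul_add a ψ φ := by apply LinearMap.ext; intro x; rfl
  add_smul a b ψ := by
    apply LinearMap.ext; intro x
    show ψ ((a + b).unop • x) = ψ (a.unop • x) + ψ (b.unop • x)
    rw [MulOpposite.unop_add, add_smul, map_add]
  zero_smul ψ := by
    apply LinearMap.ext; intro x
    show ψ ((0 : R) • x) = 0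
    rw [zero_smul, map_zero]

@[simp] lemma opSMul_apply (a : Rᵐᵒᵖ) (ψ : RightDual S N) (x : N) :
    (a • ψ) x = ψ (a.unop • x) := rfl

@[simp] lemma smul_apply' (s : S) (ψ : RightDual S N) (x : N) :
    (s • ψ) x = s * ψ x := rfl

instance : SMulCommClass S Rᵐᵒᵖ (RightDual S N) where
  smul_comm s a ψ := by apply LinearMap.ext; intro x; rfl

end RightDual

namespace LeftDual

/-- If `N` is an `R`–`S`-bimodule, the left dual carries a left `S`-action by
precomposition with the right `S`-action: `(b • ψ) x = ψ (x b)`. -/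
noncomputable instance : Module S (LeftDual R N) where
  smul b ψ :=
    haveI : SMulCommClass Sᵐᵒᵖ R N := SMulCommClass.symm R Sᵐᵒᵖ N
    ψ.comp (DistribMulAction.toLinearMap R N (MulOpposite.op b))
  one_smul ψ := by
    apply LinearMap.ext; intro x
    show ψ ((MulOpposite.op (1:S)) • x) = ψ x
    rw [MulOpposite.op_one, one_smul]
  mul_smul a b ψ := by
    apply LinearMap.ext; intro x
    show ψ ((MulOpposite.op (a*b)) • x) = ψ (MulOpposite.op b • MulOpposite.op a • x)
    rw [MulOpposite.op_mul, mul_smul]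
  smul_zero a := by apply LinearMap.ext; intro x; rfl
  smul_add a ψ φ := by apply LinearMap.ext; intro x; rfl
  add_smul a b ψ := by
    apply LinearMap.ext; intro x
    show ψ ((MulOpposite.op (a+b)) • x) = ψ (MulOpposite.op a • x) + ψ (MulOpposite.op b • x)
    rw [MulOpposite.op_add, add_smul, map_add]
  zero_smul ψ := by
    apply LinearMap.ext; intro x
    show ψ ((MulOpposite.op (0:S)) • x) = 0
    rw [MulOpposite.op_zero, zero_smul, map_zero]

@[simp] lemma sSMul_apply (b : S) (ψ : LeftDual R N) (x : N) :
    (b • ψ) x = ψ (MulOpposite.op b • x) := rfl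

instance : SMulCommClass S Rᵐᵒᵖ (LeftDual R N) where
  smul_comm s a ψ := by apply LinearMap.ext; intro x; rfl

end LeftDual

end Bimod
section SymDual

variable (D₀ D₁ : Type) [DivisionRing D₀] [DivisionRing D₁]
variable (M : Type) [AddCommGroup M] [Module D₀ M] [Module D₁ᵐᵒᵖ M]
  [SMulCommClass D₀ D₁ᵐᵒᵖ M]

/-- A `D₀`–`D₁`-bimodule `M` *has symmetric duals* if `M` and `M*` are
finite-dimensional on the left and the right and there is a bimodule isomorphism
`M ≅ M**` (a left `D₀`-linear equivalence commuting with the right `D₁`-actions). -/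
def HasSymmetricDuals : Prop :=
  Module.Finite D₀ M ∧ Module.Finite D₁ᵐᵒᵖ M ∧
  Module.Finite D₁ (RightDual D₁ M) ∧ Module.Finite D₀ᵐᵒᵖ (RightDual D₁ M) ∧
  ∃ e : M ≃ₗ[D₀] RightDual D₀ (RightDual D₁ M),
    ∀ (b : D₁ᵐᵒᵖ) (x : M), e (b • x) = b • e x

end SymDual

section Helpers
open Module

lemma finiteOfSemilinear {R S M N : Type} [Semiring R] [Semiring S]
    [AddCommMonoid M] [AddCommMonoid N] [Module R M] [Module S N]
    (σ : R → S) (f : M →+ N) (hf : Function.Surjective f)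
    (hc : ∀ r x, f (r • x) = σ r • f x) [Module.Finite R M] : Module.Finite S N := by
  classical
  obtain ⟨s, hs⟩ := Module.Finite.fg_top (R := R) (M := M)
  refine ⟨⟨s.image f, ?_⟩⟩
  rw [eq_top_iff]
  rintro n -
  obtain ⟨m, rfl⟩ := hf n
  have hm : m ∈ Submodule.span R (s : Set M) := hs ▸ Submodule.mem_top
  induction hm using Submodule.span_induction with
  | mem x hx => exact Submodule.subset_span (by simp; exact ⟨x, hx, rfl⟩)
  | zero => simpa using Submodule.zero_mem _
  | add x y _ _ hx hy => rw [map_add]; exact Submodule.add_mem _ hx hy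
  | smul r x _ hx => rw [hc]; exact Submodule.smul_mem _ _ hx

lemma finrankEqOfEquivEquiv {R S M N : Type} [Ring R] [Ring S] [AddCommGroup M] [AddCommGroup N]
    [Module R M] [Module S N] (i : R ≃+* S) (j : M ≃+ N)
    (hc : ∀ r m, j (r • m) = i r • j m) : finrank R M = finrank S N := by
  unfold Module.finrank
  rw [rank_eq_of_equiv_equiv (⇑i) j i.bijective hc]

noncomputable def unopRingEquiv (K : Type) [Field K] : Kᵐᵒᵖ ≃+* K where
  toFun := MulOpposite.unop
  invFun := MulOpposite.op
  left_inv _ := rfl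
  right_inv _ := rfl
  map_add' _ _ := rfl
  map_mul' a b := mul_comm (MulOpposite.unop a) (MulOpposite.unop b) ▸ rfl

section TwistedDual
variable (K V : Type) [Field K] [AddCommGroup V] [Module Kᵐᵒᵖ V]

noncomputable def twistDual : Module.Dual Kᵐᵒᵖ V ≃+ (V →ₗ[Kᵐᵒᵖ] K) where
  toFun ψ :=
    { toFun := fun x => (ψ x).unop
      map_add' := fun x y => by simp
      map_smul' := fun t x => by simp [MulOpposite.smul_eq_mul_unop] }
  invFun χ :=
    { toFun := fun x => MulOpposite.op (χ x)
      map_add' := fun x y => by simp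
      map_smul' := fun t x => by simp [MulOpposite.smul_eq_mul_unop] }
  left_inv ψ := by ext x; rfl
  right_inv χ := by ext x; rfl
  map_add' ψ φ := by ext x; rfl

lemma twistDual_compat (t : Kᵐᵒᵖ) (ψ : Module.Dual Kᵐᵒᵖ V) :
    twistDual K V (t • ψ) = (unopRingEquiv K t) • twistDual K V ψ := by
  ext x
  show (t • ψ x).unop = t.unop * (ψ x).unop
  simp [MulOpposite.smul_eq_mul_unop, mul_comm]

lemma twistDual_finite [Module.Finite Kᵐᵒᵖ V] : Module.Finite K (V →ₗ[Kᵐᵒᵖ] K) := by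
  have : Module.Finite Kᵐᵒᵖ (Module.Dual Kᵐᵒᵖ V) := inferInstance
  exact finiteOfSemilinear (unopRingEquiv K) (twistDual K V).toAddMonoidHom
    (twistDual K V).surjective (twistDual_compat K V)

lemma twistDual_finrank : finrank K (V →ₗ[Kᵐᵒᵖ] K) = finrank Kᵐᵒᵖ V := by
  rw [← finrankEqOfEquivEquiv (unopRingEquiv K) (twistDual K V) (twistDual_compat K V)]
  exact Subspace.dual_finrank_eq

lemma twistDual_exists [Nontrivial V] : ∃ χ : V →ₗ[Kᵐᵒᵖ] K, χ ≠ 0 := by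
  obtain ⟨i⟩ := (Basis.ofVectorSpace Kᵐᵒᵖ V).index_nonempty
  refine ⟨twistDual K V ((Basis.ofVectorSpace Kᵐᵒᵖ V).coord i), fun h => ?_⟩
  have h2 := congrArg (fun χ : V →ₗ[Kᵐᵒᵖ] K => χ ((Basis.ofVectorSpace Kᵐᵒᵖ V) i)) h
  simp only [twistDual, AddEquiv.coe_mk, Equiv.coe_fn_mk, LinearMap.coe_mk, AddHom.coe_mk,
    Basis.coord_apply, Basis.repr_self, Finsupp.single_eq_same, LinearMap.zero_apply] at h2
  exact one_ne_zero h2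

end TwistedDual

lemma surjOfInjSemilinear {K L V W : Type} [Field K] [Field L] [AddCommGroup V] [AddCommGroup W]
    [Module K V] [Module L W] [Module.Finite K V] [Module.Finite L W]
    (σ : K ≃+* L) (f : V →+ W) (hinj : Function.Injective f)
    (hc : ∀ (c : K) (x : V), f (c • x) = σ c • f x)
    (hrank : Module.finrank K V = Module.finrank L W) :
    Function.Surjective f := by
  letI : Module K W := Module.compHom W (σ : K →+* L)
  have hsmul : ∀ (c : K) (w : W), c • w = σ c • w := fun _ _ => rfl
  letI fd : Module.Finite K W :=
    finiteOfSemilinear (fun r : L => (σ.symm r : K)) (AddMonoidHom.id W)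
      Function.surjective_id (fun r x => by rw [hsmul]; simp)
  have hr2 : Module.finrank K W = Module.finrank L W :=
    finrankEqOfEquivEquiv σ (AddEquiv.refl W) (fun c w => hsmul c w)
  let flin : V →ₗ[K] W :=
    { toFun := f, map_add' := f.map_add,
      map_smul' := fun c x => by show f (c • x) = σ c • f x; rw [hc] }
  have h1 : Module.finrank K (LinearMap.range flin) = Module.finrank K V :=
    LinearMap.finrank_range_of_inj hinj
  have h2 : LinearMap.range flin = ⊤ :=
    Submodule.eq_top_of_finrank_eq (by rw [h1, hrank, ← hr2])
  intro w
  obtain ⟨v, hv⟩ := LinearMap.range_eq_top.1 h2 w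
  exact ⟨v, hv⟩

end Helpers

namespace Statement3Aux

open MulOpposite Module

variable (k D₀ D₁ M : Type) [Field k] [Field D₀] [Field D₁]
  [Algebra k D₀] [Algebra k D₁]
  [AddCommGroup M] [Module D₀ M] [Module D₁ᵐᵒᵖ M]
  [SMulCommClass D₀ D₁ᵐᵒᵖ M]
  [Module k M] [IsScalarTower k D₀ M] [IsScalarTower k D₁ᵐᵒᵖ M]

noncomputable def aL : D₀ →+* Module.End k M := Module.toModuleEnd k M
noncomputable def bL : D₁ᵐᵒᵖ →+* Module.End k M := Module.toModuleEnd k M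

variable {D₀ D₁}

@[simp] lemma aL_apply (a : D₀) (x : M) : aL k D₀ M a x = a • x := rfl
@[simp] lemma bL_apply (s : D₁ᵐᵒᵖ) (x : M) : bL k D₁ M s x = s • x := rfl

variable (D₀ D₁)

noncomputable def gens : Set (Module.End k M) :=
  Set.range (aL k D₀ M) ∪ Set.range (bL k D₁ M)

noncomputable def BB : Subalgebra k (Module.End k M) := Algebra.adjoin k (gens k D₀ D₁ M)

variable {D₀ D₁ M}

lemma aL_mem (a : D₀) : aL k D₀ M a ∈ BB k D₀ D₁ M :=
  Algebra.subset_adjoin (Or.inl ⟨a, rfl⟩)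

lemma bL_mem (s : D₁ᵐᵒᵖ) : bL k D₁ M s ∈ BB k D₀ D₁ M :=
  Algebra.subset_adjoin (Or.inr ⟨s, rfl⟩)

lemma gens_comm : ∀ x ∈ gens k D₀ D₁ M, ∀ y ∈ gens k D₀ D₁ M, x * y = y * x := by
  rintro x (⟨a, rfl⟩ | ⟨s, rfl⟩) y (⟨a', rfl⟩ | ⟨s', rfl⟩) <;>
    refine LinearMap.ext fun m => ?_ <;>
    simp only [Module.End.mul_apply, aL_apply, bL_apply]
  · rw [smul_smul, smul_smul, mul_comm]
  · rw [smul_comm]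
  · exact (smul_comm a' s m).symm
  · rw [smul_smul, smul_smul, mul_comm]

lemma BB_comm {f g : Module.End k M} (hf : f ∈ BB k D₀ D₁ M) (hg : g ∈ BB k D₀ D₁ M) :
    f * g = g * f := by
  have h1 : BB k D₀ D₁ M ≤ Subalgebra.centralizer k (gens k D₀ D₁ M) :=
    Algebra.adjoin_le fun x hx => (Subalgebra.mem_centralizer_iff k).2
      fun g hg => gens_comm k g hg x hx
  have h2 : BB k D₀ D₁ M ≤ Subalgebra.centralizer k ((BB k D₀ D₁ M : Set (Module.End k M))) :=
    Algebra.adjoin_le fun x hx => (Subalgebra.mem_centralizer_iff k).2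
      fun y hy => ((Subalgebra.mem_centralizer_iff k).1 (h1 hy) x hx).symm
  exact (Subalgebra.mem_centralizer_iff k).1 (h2 hg) f hf

lemma smul₀_comm {f : Module.End k M} (hf : f ∈ BB k D₀ D₁ M) (a : D₀) (x : M) :
    f (a • x) = a • f x := by
  have h := BB_comm k (aL_mem k a) hf
  have := LinearMap.congr_fun h x
  simpa only [Module.End.mul_apply, aL_apply] using this.symm

lemma smul₁_comm {f : Module.End k M} (hf : f ∈ BB k D₀ D₁ M) (s : D₁ᵐᵒᵖ) (x : M) :
    f (s • x) = s • f x := by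
  have h := BB_comm k (bL_mem k s) hf
  have := LinearMap.congr_fun h x
  simpa only [Module.End.mul_apply, bL_apply] using this.symm

variable (hsimple : ∀ p : Submodule D₀ M,
    (∀ (b : D₁ᵐᵒᵖ) (x : M), x ∈ p → b • x ∈ p) → p = ⊥ ∨ p = ⊤)

include hsimple

lemma BB_inj {f : Module.End k M} (hf : f ∈ BB k D₀ D₁ M) (h0 : f ≠ 0) :
    Function.Injective f := by
  let p : Submodule D₀ M :=
    { carrier := {x | f x = 0}
      add_mem' := fun {x y} hx hy => by
        show f (x + y) = 0
        rw [map_add, hx, hy, add_zero]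
      zero_mem' := map_zero f
      smul_mem' := fun a x hx => by
        show f (a • x) = 0
        rw [smul₀_comm k hf, hx, smul_zero] }
  have hc : ∀ (s : D₁ᵐᵒᵖ) (x : M), x ∈ p → s • x ∈ p := fun s x hx => by
    show f (s • x) = 0
    rw [smul₁_comm k hf, hx, smul_zero]
  rcases hsimple p hc with h | h
  · intro x y hxy
    have hxy' : x - y ∈ p := by
      show f (x - y) = 0
      rw [map_sub, hxy, sub_self]
    rw [h] at hxy'
    rw [← sub_eq_zero]
    exact hxy'
  · refine absurd (LinearMap.ext fun x => ?_) h0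
    exact Submodule.eq_top_iff'.1 h x

lemma BB_surj {f : Module.End k M} (hf : f ∈ BB k D₀ D₁ M) (h0 : f ≠ 0) :
    Function.Surjective f := by
  let q : Submodule D₀ M :=
    { carrier := Set.range f
      add_mem' := by
        rintro x y ⟨u, hu⟩ ⟨v, hv⟩
        exact ⟨u + v, by rw [map_add, hu, hv]⟩
      zero_mem' := ⟨0, map_zero f⟩
      smul_mem' := by
        rintro a y ⟨u, hu⟩
        exact ⟨a • u, by rw [smul₀_comm k hf, hu]⟩ }
  have hc : ∀ (s : D₁ᵐᵒᵖ) (y : M), y ∈ q → s • y ∈ q := by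
    rintro s y ⟨u, hu⟩
    exact ⟨s • u, by rw [smul₁_comm k hf, hu]⟩
  rcases hsimple q hc with h | h
  · refine absurd (LinearMap.ext fun x => ?_) h0
    have : f x ∈ q := ⟨x, rfl⟩
    rw [h] at this
    simpa using this
  · exact fun y => Submodule.eq_top_iff'.1 h y

lemma BB_bij {f : Module.End k M} (hf : f ∈ BB k D₀ D₁ M) (h0 : f ≠ 0) :
    Function.Bijective f :=
  ⟨BB_inj k hsimple hf h0, BB_surj k hsimple hf h0⟩

end Statement3Aux

namespace Statement3Aux

open MulOpposite Module

variable (k : Type) {D₀ D₁ M : Type} [Field k] [Field D₀] [Field D₁]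
  [Algebra k D₀] [Algebra k D₁]
  [AddCommGroup M] [Module D₀ M] [Module D₁ᵐᵒᵖ M]
  [SMulCommClass D₀ D₁ᵐᵒᵖ M]
  [Module k M] [IsScalarTower k D₀ M] [IsScalarTower k D₁ᵐᵒᵖ M]

noncomputable def phiHom (m₀ : M) : ↥(BB k D₀ D₁ M) →+ M where
  toFun b := (b : Module.End k M) m₀
  map_zero' := rfl
  map_add' _ _ := rfl

lemma phiHom_smul₀ (m₀ : M) (a : D₀) (b : ↥(BB k D₀ D₁ M)) :
    phiHom k m₀ (⟨aL k D₀ M a, aL_mem (D₁ := D₁) k a⟩ * b) = a • phiHom k m₀ b := rfl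

lemma phiHom_smul₁ (m₀ : M) (s : D₁ᵐᵒᵖ) (b : ↥(BB k D₀ D₁ M)) :
    phiHom k m₀ (⟨bL k D₁ M s, bL_mem (D₀ := D₀) k s⟩ * b) = s • phiHom k m₀ b := rfl

variable (hsimple : ∀ p : Submodule D₀ M,
    (∀ (b : D₁ᵐᵒᵖ) (x : M), x ∈ p → b • x ∈ p) → p = ⊥ ∨ p = ⊤)

include hsimple

lemma phiHom_inj (m₀ : M) (hm₀ : m₀ ≠ 0) :
    Function.Injective (phiHom k (D₀ := D₀) (D₁ := D₁) m₀) := by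
  rw [injective_iff_map_eq_zero]
  intro b hb
  by_contra hbne
  have hb0 : (b : Module.End k M) ≠ 0 := by simpa using hbne
  have hinj := BB_inj k hsimple b.2 hb0
  exact hm₀ (hinj (show (b : Module.End k M) m₀ = (b : Module.End k M) 0 by
    rw [map_zero]; exact hb))

lemma phiHom_surj (m₀ : M) (hm₀ : m₀ ≠ 0) :
    Function.Surjective (phiHom k (D₀ := D₀) (D₁ := D₁) m₀) := by
  let q : Submodule D₀ M :=
    { carrier := Set.range (phiHom k (D₀ := D₀) (D₁ := D₁) m₀)
      add_mem' := by rintro x y ⟨b, rfl⟩ ⟨c, rfl⟩; exact ⟨b + c, map_add _ _ _⟩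
      zero_mem' := ⟨0, map_zero _⟩
      smul_mem' := by
        rintro a y ⟨b, rfl⟩
        exact ⟨⟨aL k D₀ M a, aL_mem (D₁ := D₁) k a⟩ * b, phiHom_smul₀ k m₀ a b⟩ }
  have hc : ∀ (s : D₁ᵐᵒᵖ) (y : M), y ∈ q → s • y ∈ q := by
    rintro s y ⟨b, rfl⟩
    exact ⟨⟨bL k D₁ M s, bL_mem (D₀ := D₀) k s⟩ * b, phiHom_smul₁ k m₀ s b⟩
  rcases hsimple q hc with h | h
  · exfalso
    have hq : m₀ ∈ q := ⟨1, show ((1 : ↥(BB k D₀ D₁ M)) : Module.End k M) m₀ = m₀ by simp⟩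
    rw [h] at hq
    exact hm₀ (by simpa using hq)
  · exact fun y => Submodule.eq_top_iff'.1 h y

omit hsimple

noncomputable def psiHom (ψ₀ : RightDual D₁ M) :
    ↥(BB k D₀ D₁ M) →+ RightDual D₁ M where
  toFun b :=
    { toFun := fun x => ψ₀ ((b : Module.End k M) x)
      map_add' := fun x y => by rw [map_add, map_add]
      map_smul' := fun s x => by
        show ψ₀ ((b : Module.End k M) (s • x)) = s • ψ₀ ((b : Module.End k M) x)
        rw [smul₁_comm k b.2, map_smul] }
  map_zero' := by ext x; simp
  map_add' b c := by ext x; simp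

lemma psiHom_apply (ψ₀ : RightDual D₁ M) (b : ↥(BB k D₀ D₁ M)) (x : M) :
    psiHom k (D₀ := D₀) ψ₀ b x = ψ₀ ((b : Module.End k M) x) := rfl

lemma psiHom_smul₀ (ψ₀ : RightDual D₁ M) (a : D₀) (b : ↥(BB k D₀ D₁ M)) :
    psiHom k ψ₀ (⟨aL k D₀ M a, aL_mem (D₁ := D₁) k a⟩ * b) = op a • psiHom k ψ₀ b := by
  ext x
  show ψ₀ ((aL k D₀ M a * (b : Module.End k M)) x)
      = ψ₀ ((b : Module.End k M) ((op a).unop • x))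
  rw [BB_comm k (aL_mem k a) b.2]
  rfl

lemma psiHom_smul₁ (ψ₀ : RightDual D₁ M) (s : D₁ᵐᵒᵖ) (b : ↥(BB k D₀ D₁ M)) :
    psiHom k ψ₀ (⟨bL k D₁ M s, bL_mem (D₀ := D₀) k s⟩ * b) = s.unop • psiHom k ψ₀ b := by
  ext x
  show ψ₀ (s • (b : Module.End k M) x) = s.unop * ψ₀ ((b : Module.End k M) x)
  rw [map_smul, MulOpposite.smul_eq_mul_unop, mul_comm]

include hsimple

lemma psiHom_inj (ψ₀ : RightDual D₁ M) (hψ₀ : ψ₀ ≠ 0) :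
    Function.Injective (psiHom k (D₀ := D₀) ψ₀) := by
  rw [injective_iff_map_eq_zero]
  intro b hb
  by_contra hbne
  have hb0 : (b : Module.End k M) ≠ 0 := by simpa using hbne
  have hsurj := BB_surj k hsimple b.2 hb0
  apply hψ₀
  ext y
  obtain ⟨x, rfl⟩ := hsurj y
  simpa [psiHom_apply] using DFunLike.congr_fun hb x

omit hsimple

noncomputable def PhiHom (Φ₀ : RightDual D₀ (RightDual D₁ M)) :
    ↥(BB k D₀ D₁ M) →+ RightDual D₀ (RightDual D₁ M) where
  toFun b :=
    { toFun := fun ψ => Φ₀ (psiHom k ψ b)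
      map_add' := fun ψ χ => by
        have h : psiHom k (ψ + χ) b = psiHom k ψ b + psiHom k χ b := by ext x; rfl
        rw [h, map_add]
      map_smul' := fun a ψ => by
        have h : psiHom k (a • ψ) b = a • psiHom k ψ b := by
          ext x
          show ψ (a.unop • (b : Module.End k M) x) = ψ ((b : Module.End k M) (a.unop • x))
          rw [smul₀_comm k b.2]
        show Φ₀ (psiHom k (a • ψ) b) = a • Φ₀ (psiHom k ψ b)
        rw [h, map_smul] }
  map_zero' := by
    ext ψ
    show Φ₀ (psiHom k ψ 0) = 0
    rw [map_zero, map_zero]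
  map_add' b c := by
    ext ψ
    show Φ₀ (psiHom k ψ (b + c)) = _
    rw [map_add, map_add]
    rfl

lemma PhiHom_apply (Φ₀ : RightDual D₀ (RightDual D₁ M)) (b : ↥(BB k D₀ D₁ M))
    (ψ : RightDual D₁ M) : PhiHom k Φ₀ b ψ = Φ₀ (psiHom k ψ b) := rfl

lemma PhiHom_smul₀ (Φ₀ : RightDual D₀ (RightDual D₁ M)) (a : D₀) (b : ↥(BB k D₀ D₁ M)) :
    PhiHom k Φ₀ (⟨aL k D₀ M a, aL_mem (D₁ := D₁) k a⟩ * b) = a • PhiHom k Φ₀ b := by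
  ext ψ
  show Φ₀ (psiHom k ψ (⟨aL k D₀ M a, aL_mem (D₁ := D₁) k a⟩ * b)) = a * Φ₀ (psiHom k ψ b)
  rw [psiHom_smul₀, map_smul, MulOpposite.smul_eq_mul_unop]
  exact mul_comm _ _

lemma PhiHom_smul₁ (Φ₀ : RightDual D₀ (RightDual D₁ M)) (s : D₁ᵐᵒᵖ) (b : ↥(BB k D₀ D₁ M)) :
    PhiHom k Φ₀ (⟨bL k D₁ M s, bL_mem (D₀ := D₀) k s⟩ * b) = s • PhiHom k Φ₀ b := by
  ext ψ
  have h : psiHom k ψ (⟨bL k D₁ M s, bL_mem (D₀ := D₀) k s⟩ * b) = psiHom k (s.unop • ψ) b := by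
    ext x
    show ψ (s • (b : Module.End k M) x) = s.unop * ψ ((b : Module.End k M) x)
    rw [map_smul, MulOpposite.smul_eq_mul_unop, mul_comm]
  show Φ₀ (psiHom k ψ (⟨bL k D₁ M s, bL_mem (D₀ := D₀) k s⟩ * b)) = Φ₀ (psiHom k (s.unop • ψ) b)
  rw [h]

include hsimple

lemma PhiHom_inj (Φ₀ : RightDual D₀ (RightDual D₁ M)) (hΦ₀ : Φ₀ ≠ 0) :
    Function.Injective (PhiHom k Φ₀) := by
  rw [injective_iff_map_eq_zero]
  intro b hb
  by_contra hbne
  have hb0 : (b : Module.End k M) ≠ 0 := by simpa using hbne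
  have hbij := BB_bij k hsimple b.2 hb0
  apply hΦ₀
  ext χ
  let e : M ≃ₗ[k] M := LinearEquiv.ofBijective (b : Module.End k M) hbij
  have hbe : ∀ y, (b : Module.End k M) y = e y := fun _ => rfl
  let ψ : RightDual D₁ M :=
    { toFun := fun x => χ (e.symm x)
      map_add' := fun x y => by rw [map_add, map_add]
      map_smul' := fun s x => by
        have h1 : e.symm (s • x) = s • e.symm x := by
          apply hbij.1
          rw [hbe, hbe]
          show e (e.symm (s • x)) = (b : Module.End k M) (s • e.symm x)
          rw [smul₁_comm k b.2, hbe, e.apply_symm_apply, e.apply_symm_apply]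
        show χ (e.symm (s • x)) = s • χ (e.symm x)
        rw [h1, map_smul] }
  have hψb : psiHom k ψ b = χ := by
    ext x
    show χ (e.symm ((b : Module.End k M) x)) = χ x
    rw [hbe, e.symm_apply_apply]
  have h2 : Φ₀ (psiHom k ψ b) = 0 := by simpa [PhiHom_apply] using DFunLike.congr_fun hb ψ
  rw [hψb] at h2
  simpa using h2

end Statement3Aux

namespace Statement3Aux

open MulOpposite Module

variable (k : Type) {D₀ D₁ M : Type} [Field k] [Field D₀] [Field D₁]
  [Algebra k D₀] [Algebra k D₁]
  [AddCommGroup M] [Module D₀ M] [Module D₁ᵐᵒᵖ M]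
  [SMulCommClass D₀ D₁ᵐᵒᵖ M]
  [Module k M] [IsScalarTower k D₀ M] [IsScalarTower k D₁ᵐᵒᵖ M]

set_option maxHeartbeats 1600000 in
set_option synthInstance.maxHeartbeats 400000 in
include k in
lemma mainAux (hnontriv : Nontrivial M)
    (hsimple : ∀ p : Submodule D₀ M,
      (∀ (b : D₁ᵐᵒᵖ) (x : M), x ∈ p → b • x ∈ p) → p = ⊥ ∨ p = ⊤)
    [Module.Finite D₀ M] [Module.Finite D₁ᵐᵒᵖ M] :
    HasSymmetricDuals D₀ D₁ M := by
  haveI := hnontriv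
  obtain ⟨m₀, hm₀⟩ := exists_ne (0 : M)
  let φ : ↥(BB k D₀ D₁ M) ≃+ M :=
    AddEquiv.ofBijective (phiHom k (D₀ := D₀) (D₁ := D₁) m₀)
      ⟨phiHom_inj k hsimple m₀ hm₀, phiHom_surj k hsimple m₀ hm₀⟩
  have hφs₀ : ∀ (a : D₀) (x : M),
      φ.symm (a • x) = ⟨aL k D₀ M a, aL_mem (D₁ := D₁) k a⟩ * φ.symm x := by
    intro a x
    apply φ.injective
    rw [φ.apply_symm_apply]
    have h : φ (⟨aL k D₀ M a, aL_mem (D₁ := D₁) k a⟩ * φ.symm x)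
        = a • φ (φ.symm x) := phiHom_smul₀ k m₀ a (φ.symm x)
    rw [φ.apply_symm_apply] at h
    exact h.symm
  have hφs₁ : ∀ (s : D₁ᵐᵒᵖ) (x : M),
      φ.symm (s • x) = ⟨bL k D₁ M s, bL_mem (D₀ := D₀) k s⟩ * φ.symm x := by
    intro s x
    apply φ.injective
    rw [φ.apply_symm_apply]
    have h : φ (⟨bL k D₁ M s, bL_mem (D₀ := D₀) k s⟩ * φ.symm x)
        = s • φ (φ.symm x) := phiHom_smul₁ k m₀ s (φ.symm x)
    rw [φ.apply_symm_apply] at h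
    exact h.symm
  obtain ⟨ψ₀, hψ₀⟩ := twistDual_exists D₁ M
  let fΨ : M →+ RightDual D₁ M :=
    { toFun := fun x => psiHom k ψ₀ (φ.symm x)
      map_zero' := by rw [map_zero, map_zero]
      map_add' := fun x y => by rw [map_add, map_add] }
  have hfΨinj : Function.Injective fΨ :=
    (psiHom_inj k hsimple ψ₀ hψ₀).comp φ.symm.injective
  have hfΨc₁ : ∀ (t : D₁ᵐᵒᵖ) (x : M), fΨ (t • x) = (unopRingEquiv D₁) t • fΨ x := by
    intro t x
    show psiHom k ψ₀ (φ.symm (t • x)) = t.unop • psiHom k ψ₀ (φ.symm x)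
    rw [hφs₁, psiHom_smul₁]
  haveI hMstarFin : Module.Finite D₁ (RightDual D₁ M) := twistDual_finite D₁ M
  have hfΨsurj : Function.Surjective fΨ :=
    surjOfInjSemilinear (unopRingEquiv D₁) fΨ hfΨinj hfΨc₁ ((twistDual_finrank D₁ M).symm)
  have hfΨc₀ : ∀ (a : D₀) (x : M), fΨ (a • x) = op a • fΨ x := by
    intro a x
    show psiHom k ψ₀ (φ.symm (a • x)) = op a • psiHom k ψ₀ (φ.symm x)
    rw [hφs₀, psiHom_smul₀]
  haveI hMstarFin₀ : Module.Finite D₀ᵐᵒᵖ (RightDual D₁ M) :=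
    finiteOfSemilinear (fun a : D₀ => op a) fΨ hfΨsurj hfΨc₀
  have hrk : finrank D₀ M = finrank D₀ᵐᵒᵖ (RightDual D₁ M) :=
    finrankEqOfEquivEquiv (unopRingEquiv D₀).symm
      (AddEquiv.ofBijective fΨ ⟨hfΨinj, hfΨsurj⟩) hfΨc₀
  haveI : Nontrivial (RightDual D₁ M) := ⟨⟨ψ₀, 0, hψ₀⟩⟩
  obtain ⟨Φ₀, hΦ₀⟩ := twistDual_exists D₀ (RightDual D₁ M)
  let fΦ : M →ₗ[D₀] RightDual D₀ (RightDual D₁ M) :=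
    { toFun := fun x => PhiHom k Φ₀ (φ.symm x)
      map_add' := fun x y => by rw [map_add, map_add]
      map_smul' := fun a x => by
        show PhiHom k Φ₀ (φ.symm (a • x)) = a • PhiHom k Φ₀ (φ.symm x)
        rw [hφs₀, PhiHom_smul₀] }
  have hfΦinj : Function.Injective fΦ :=
    (PhiHom_inj k hsimple Φ₀ hΦ₀).comp φ.symm.injective
  haveI : Module.Finite D₀ (RightDual D₀ (RightDual D₁ M)) :=
    twistDual_finite D₀ (RightDual D₁ M)
  have hr2 : finrank D₀ (RightDual D₀ (RightDual D₁ M)) = finrank D₀ M := by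
    rw [twistDual_finrank D₀ (RightDual D₁ M), ← hrk]
  have hfΦsurj : Function.Surjective fΦ := by
    have h1 : finrank D₀ (LinearMap.range fΦ) = finrank D₀ M :=
      LinearMap.finrank_range_of_inj hfΦinj
    have h2 : LinearMap.range fΦ = ⊤ :=
      Submodule.eq_top_of_finrank_eq (by rw [h1, hr2])
    exact LinearMap.range_eq_top.1 h2
  refine ⟨inferInstance, inferInstance, hMstarFin, hMstarFin₀,
    LinearEquiv.ofBijective fΦ ⟨hfΦinj, hfΦsurj⟩, ?_⟩
  intro s x
  show PhiHom k Φ₀ (φ.symm (s • x)) = s • PhiHom k Φ₀ (φ.symm x)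
  rw [hφs₁, PhiHom_smul₁]

end Statement3Aux

section Statement3

variable (k : Type) [Field k]
variable (D₀ D₁ : Type) [Field D₀] [Field D₁]
variable [Algebra k D₀] [Algebra k D₁]
variable (M : Type) [AddCommGroup M] [Module D₀ M] [Module D₁ᵐᵒᵖ M]
  [SMulCommClass D₀ D₁ᵐᵒᵖ M]
-- `k` acts centrally on `M`:
variable [Module k M] [IsScalarTower k D₀ M] [IsScalarTower k D₁ᵐᵒᵖ M]

/-- Let `k` be a field, `D₀`, `D₁` fields containing `k`, and `M` a
`D₀`–`D₁`-bimodule with central `k`-action which is simple as a bimodule and has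
left-right dimension `(m, n)` with `char k` dividing neither `m` nor `n`.
Then `M` has symmetric duals. -/
theorem statement3 (m n : ℕ)
    -- `M` is nonzero and has no proper nonzero sub-bimodules:
    (hnontriv : Nontrivial M)
    (hsimple : ∀ p : Submodule D₀ M,
      (∀ (b : D₁ᵐᵒᵖ) (x : M), x ∈ p → b • x ∈ p) → p = ⊥ ∨ p = ⊤)
    -- `M` has left-right dimension `(m, n)`:
    (hm : Module.finrank D₀ M = m) (hn : Module.finrank D₁ᵐᵒᵖ M = n)
    [Module.Finite D₀ M] [Module.Finite D₁ᵐᵒᵖ M]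
    -- `char k` divides neither `m` nor `n`:
    (hcharm : (m : k) ≠ 0) (hcharn : (n : k) ≠ 0) :
    HasSymmetricDuals D₀ D₁ M := by
  exact Statement3Aux.mainAux k hnontriv hsimple

end Statement3
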